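/- arXiv:1605.08142 — 12 statements merged into one kernel-verified Lean document; each statement's English description precedes it below -/
import Mathlib

section
/- Let N ≥ 3 be an integer, let p, q be nonzero real numbers, and let T, A, B, λ be real numbers with T − λA + B = 0. Set 2* = 2N/(N−2), d*(p,q) = N(p−2)(q−2) − 2pq, d = (q−p)·d*(p,q)/(2Npq), E″ = T − (p−1)λA + (q−1)B and P = ((N−2)/(2N))·T − (λ/p)·A + (1/q)·B. Then: d·T = ((q−p)/(pq))·E″ + (q−p)·P, d·(λA) = ((q−2*)/(2*·q))·E″ + (q−2)·P, and d·B = ((p−2*)/(2*·p))·E″ + (p−2)·P. -/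
/-- Cramer-type resolution of the fibering/Pohozaev linear system when `E' = 0`. -/
theorem fibering_system_resolution (N : ℕ) (hN : 3 ≤ N) (p q T A B lam : ℝ)
    (hp : p ≠ 0) (hq : q ≠ 0) (hE' : T - lam * A + B = 0) :
    let twoStar : ℝ := 2 * N / ((N : ℝ) - 2)
    let dstar : ℝ := (N : ℝ) * (p - 2) * (q - 2) - 2 * p * q
    let d : ℝ := (q - p) * dstar / (2 * N * p * q)
    let E'' : ℝ := T - (p - 1) * lam * A + (q - 1) * B
    let P : ℝ := ((N : ℝ) - 2) / (2 * N) * T - lam / p * A + 1 / q * B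
    d * T = (q - p) / (p * q) * E'' + (q - p) * P ∧
    d * (lam * A) = (q - twoStar) / (twoStar * q) * E'' + (q - 2) * P ∧
    d * B = (p - twoStar) / (twoStar * p) * E'' + (p - 2) * P := by
  intro twoStar dstar d E'' P
  have hN0 : (N : ℝ) ≠ 0 := by positivity
  have hN2 : (N : ℝ) - 2 ≠ 0 := by
    have : (3 : ℝ) ≤ N := by exact_mod_cast hN
    linarith
  have hB : B = lam * A - T := by linarith
  refine ⟨?_, ?_, ?_⟩ <;>
    simp only [twoStar, dstar, d, E'', P, hB] <;> field_simp <;> ring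
end

section
/- Let N ≥ 3 be an integer, let p, q > 0 be real with p ≠ q, let λ > 0, and suppose there exist real numbers T > 0, A > 0, B > 0 satisfying T − λA + B = 0 and ((N−2)/(2N))·T − (λ/p)·A + (1/q)·B = 0. Then either 2N/(N−2) < p < q or q < p < 2N/(N−2). (This is the necessary condition of Theorem 1 for existence of a nontrivial solution of −Δu = λ|u|^{p−2}u − |u|^{q−2}u on ℝ^N, N ≥ 3.) -/
/-- Necessary condition of Theorem 1 (`D = ℝ^N`, `N ≥ 3`): if `E' = 0` and `P = 0`
have a solution with `T, A, B > 0`, then `2* < p < q` or `q < p < 2*`. -/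
theorem necessary_condition_RN (N : ℕ) (hN : 3 ≤ N) (p q lam T A B : ℝ)
    (hp : 0 < p) (hq : 0 < q) (hpq : p ≠ q) (hlam : 0 < lam)
    (hT : 0 < T) (hA : 0 < A) (hB : 0 < B)
    (hE' : T - lam * A + B = 0)
    (hP : ((N : ℝ) - 2) / (2 * N) * T - lam / p * A + 1 / q * B = 0) :
    (2 * N / ((N : ℝ) - 2) < p ∧ p < q) ∨ (q < p ∧ p < 2 * N / ((N : ℝ) - 2)) := by
  have hn : (3:ℝ) ≤ (N:ℝ) := by exact_mod_cast hN
  have hn2 : (0:ℝ) < (N:ℝ) - 2 := by linarith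
  have hnpos : (0:ℝ) < (N:ℝ) := by linarith
  have key : (((N:ℝ)-2)*p - 2*N) * q * T = 2*N*(q-p)*B := by
    field_simp at hP
    linear_combination hP - 2*(N:ℝ)*q*hE'
  rcases lt_trichotomy p q with h | h | h
  · left
    refine ⟨?_, h⟩
    have h1 : 0 < 2*(N:ℝ)*(q-p)*B := by
      have : 0 < q - p := by linarith
      positivity
    have h2 : 0 < (((N:ℝ)-2)*p - 2*N) := by
      nlinarith [mul_pos hq hT]
    rw [div_lt_iff₀ hn2]
    nlinarith
  · exact absurd h hpq
  · right
    refine ⟨h, ?_⟩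
    have h1 : 2*(N:ℝ)*(q-p)*B < 0 := by
      have hqp : q - p < 0 := by linarith
      have : 0 < 2*(N:ℝ)*B := by positivity
      nlinarith
    have h2 : (((N:ℝ)-2)*p - 2*N) < 0 := by
      nlinarith [mul_pos hq hT]
    rw [lt_div_iff₀ hn2]
    nlinarith
end

section
/- Let p, q > 0 be real with p ≠ q, let λ > 0, and let T > 0, A > 0, B > 0 be real numbers with T − λA + B = 0. If moreover −(λ/p)·A + (1/q)·B = 0 (the Pohozaev constraint for dimension N = 2), then q < p; likewise, if −(1/2)·T − (λ/p)·A + (1/q)·B = 0 (the Pohozaev constraint for dimension N = 1), then q < p. (This is the necessary condition of Theorem 1 for existence of a nontrivial solution of −Δu = λ|u|^{p−2}u − |u|^{q−2}u on ℝ^N, N = 1, 2.) -/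
/-- Necessary condition of Theorem 1 for `N = 1, 2`: under the Nehari constraint
`T - λA + B = 0`, the Pohozaev constraint for dimension `2` (resp. `1`) forces `q < p`. -/
theorem necessary_condition_low_dim (p q lam T A B : ℝ)
    (hp : 0 < p) (hq : 0 < q) (hpq : p ≠ q) (hlam : 0 < lam)
    (hT : 0 < T) (hA : 0 < A) (hB : 0 < B)
    (hE' : T - lam * A + B = 0) :
    (-(lam / p) * A + 1 / q * B = 0 → q < p) ∧
    (-(1 / 2) * T - lam / p * A + 1 / q * B = 0 → q < p) := by
  constructor
  · intro h
    have h1 : lam * A * q = B * p := by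
      field_simp at h
      nlinarith [h]
    nlinarith [mul_pos hT hq]
  · intro h
    have h1 : B * p * 2 - lam * A * q * 2 = T * p * q := by
      field_simp at h
      nlinarith [h]
    nlinarith [mul_pos (mul_pos hT hp) hq, mul_pos hB hq]
end

section
/- Let N be a positive integer, let p, q > 0 be real, let λ > 0, and let T > 0, A > 0, B > 0 be real numbers satisfying T − λA + B = 0 and ((N−2)/(2N))·T − (λ/p)·A + (1/q)·B = 0. Then the energy E = (1/2)·T − (λ/p)·A + (1/q)·B equals T/N, and in particular E > 0; moreover, with E″ = T − (p−1)λA + (q−1)B and d*(p,q) = N(p−2)(q−2) − 2pq, one has the equivalences: E″ = 0 ⟺ d*(p,q) = 0; E″ > 0 ⟺ d*(p,q) > 0; E″ < 0 ⟺ d*(p,q) < 0. (This is statement (2°) of Theorem 1.) -/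
/-- Statement (2°) of Theorem 1: if `E' = 0` and `P = 0`, then the energy equals `T/N`
(hence is positive), and the sign of `E''` coincides with the sign of `d*(p,q)`. -/
theorem energy_and_second_derivative_sign (N : ℕ) (hN : 0 < N) (p q lam T A B : ℝ)
    (hp : 0 < p) (hq : 0 < q) (hlam : 0 < lam)
    (hT : 0 < T) (hA : 0 < A) (hB : 0 < B)
    (hE' : T - lam * A + B = 0)
    (hP : ((N : ℝ) - 2) / (2 * N) * T - lam / p * A + 1 / q * B = 0) :
    let E : ℝ := 1 / 2 * T - lam / p * A + 1 / q * B
    let E'' : ℝ := T - (p - 1) * lam * A + (q - 1) * B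
    let dstar : ℝ := (N : ℝ) * (p - 2) * (q - 2) - 2 * p * q
    E = T / N ∧ 0 < E ∧
    (E'' = 0 ↔ dstar = 0) ∧ (0 < E'' ↔ 0 < dstar) ∧ (E'' < 0 ↔ dstar < 0) := by
  intro E E''
  intro dstar
  have hNpos : (0:ℝ) < (N:ℝ) := by exact_mod_cast hN
  have hN0 : (N:ℝ) ≠ 0 := ne_of_gt hNpos
  have hp0 : p ≠ 0 := ne_of_gt hp
  have hq0 : q ≠ 0 := ne_of_gt hq
  -- cleared version of hP
  have hP' : ((N:ℝ) - 2) * p * q * T - 2 * N * q * (lam * A) + 2 * N * p * B = 0 := by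
    have := hP
    field_simp at this
    linarith
  have hlA : lam * A = T + B := by linarith
  have h1 : T * (((N:ℝ) - 2) * p * q - 2 * N * q) + 2 * N * (p - q) * B = 0 := by
    rw [hlA] at hP'; ring_nf at hP' ⊢; linarith
  have hEeq : E = T / N := by
    have hP2 : ((N : ℝ) - 2) / (2 * N) * T - lam / p * A + 1 / q * B = 0 := hP
    show 1 / 2 * T - lam / p * A + 1 / q * B = T / N
    field_simp at hP2 ⊢
    nlinarith [hP2]
  have key : 2 * (N:ℝ) * E'' = T * dstar := by
    show 2 * (N:ℝ) * (T - (p - 1) * lam * A + (q - 1) * B)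
        = T * ((N : ℝ) * (p - 2) * (q - 2) - 2 * p * q)
    by_cases hpq : p = q
    · subst hpq
      have h2 : T * (((N:ℝ) - 2) * p - 2 * N) * p = 0 := by ring_nf at h1 ⊢; linarith
      have h3 : ((N:ℝ) - 2) * p - 2 * N = 0 := by
        rcases mul_eq_zero.mp h2 with h | h
        · rcases mul_eq_zero.mp h with h' | h'
          · exact absurd h' (ne_of_gt hT)
          · exact h'
        · exact absurd h hp0
      linear_combination (-(2*(N:ℝ)*(p-1)))*hlA + (-(T*p))*h3
    · have hpq' : p - q ≠ 0 := sub_ne_zero_of_ne hpq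
      have h4 : (p - q) * (2 * (N:ℝ) * (T - (p - 1) * lam * A + (q - 1) * B)
          - T * ((N : ℝ) * (p - 2) * (q - 2) - 2 * p * q)) = 0 := by
        linear_combination (q - p) * h1 + (-(2*(N:ℝ)*(p-1)*(p-q)))*hlA
      rcases mul_eq_zero.mp h4 with h | h
      · exact absurd h hpq'
      · linarith
  have h2N : (0:ℝ) < 2 * N := by positivity
  refine ⟨hEeq, by rw [hEeq]; positivity, ?_, ?_, ?_⟩
  · constructor
    · intro h
      have hz : T * dstar = 0 := by rw [← key, h]; ring
      exact (mul_eq_zero.mp hz).resolve_left (ne_of_gt hT)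
    · intro h
      have hz : 2 * (N:ℝ) * E'' = 0 := by rw [key, h]; ring
      exact (mul_eq_zero.mp hz).resolve_left (ne_of_gt h2N)
  · constructor
    · intro h; nlinarith
    · intro h; nlinarith
  · constructor
    · intro h; nlinarith
    · intro h; nlinarith
end

section
/- Let N ≥ 3 be an integer, let λ > 0, and let p, q be real numbers with 2N/(N−2) < q < p. Then there exist no real numbers T > 0, A > 0, B > 0 satisfying both T − λA + B = 0 and ((N−2)/(2N))·T − (λ/p)·A + (1/q)·B = 0. (This is the algebraic content of the Corollary answering Strauss's question: the zero-mass problem −Δu = λ|u|^{p−2}u − |u|^{q−2}u on ℝ^N has no nontrivial solution when 2* < q < p and N ≥ 3.) -/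
/-- Answer to Strauss's question (algebraic content): for `N ≥ 3` and `2* < q < p`,
the system `E' = 0`, `P = 0` has no solution with `T, A, B > 0`. -/
theorem strauss_no_solution (N : ℕ) (hN : 3 ≤ N) (p q lam : ℝ) (hlam : 0 < lam)
    (hq : 2 * N / ((N : ℝ) - 2) < q) (hqp : q < p) :
    ¬ ∃ T A B : ℝ, 0 < T ∧ 0 < A ∧ 0 < B ∧
      T - lam * A + B = 0 ∧
      ((N : ℝ) - 2) / (2 * N) * T - lam / p * A + 1 / q * B = 0 := by
  rintro ⟨T, A, B, hT, hA, hB, h1, h2⟩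
  have hNR : (2:ℝ) < (N:ℝ) := by exact_mod_cast lt_of_lt_of_le (by norm_num) hN
  have hden : (0:ℝ) < (N:ℝ) - 2 := by linarith
  have h2N : (0:ℝ) < 2 * (N:ℝ) := by linarith
  have hq0 : 0 < q := lt_trans (div_pos h2N hden) hq
  have hp0 : 0 < p := lt_trans hq0 hqp
  -- 2N < q (N-2)
  have hqm : 2 * (N:ℝ) < q * ((N:ℝ) - 2) := (div_lt_iff₀ hden).mp hq
  have hiq : 1 / q < ((N:ℝ) - 2) / (2 * N) := by
    rw [div_lt_div_iff₀ hq0 h2N]; nlinarith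
  have hip : 1 / p < 1 / q := by
    apply one_div_lt_one_div_of_lt hq0 hqp
  -- lam * A = T + B
  have hlA : lam * A = T + B := by linarith
  have hmid : 1 / p < ((N:ℝ) - 2) / (2 * N) := lt_trans hip hiq
  have h2' : ((N:ℝ) - 2) / (2 * N) * T - (T + B) * (1/p) + B * (1/q) = 0 := by
    have : lam / p * A = (T + B) * (1/p) := by
      field_simp
      nlinarith
    linarith [h2, this.symm ▸ h2]
  nlinarith [mul_pos hT (sub_pos.mpr hmid), mul_pos hB (sub_pos.mpr hip)]
end

section
/- Let N ≥ 3 be an integer, let p, q > 0 be real with p ≠ q, let λ > 0, and suppose T > 0, A > 0, B > 0 are real numbers satisfying T − λA + B = 0 and ((N−2)/(2N))·T − (λ/p)·A + (1/q)·B ≤ 0. Then p < q or p < 2N/(N−2). (This is the necessary condition of Theorem 2 for existence of a nontrivial nonnegative solution of −Δu = λ|u|^{p−2}u − |u|^{q−2}u on a bounded star-shaped domain: either 0 < p < q or 0 < q < p < 2*.) -/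
/-- Necessary condition of Theorem 2 (bounded star-shaped domain, `N ≥ 3`):
if `E' = 0` and `P ≤ 0` with `T, A, B > 0`, then `p < q` or `p < 2*`. -/
theorem necessary_condition_bounded (N : ℕ) (hN : 3 ≤ N) (p q lam T A B : ℝ)
    (hp : 0 < p) (hq : 0 < q) (hpq : p ≠ q) (hlam : 0 < lam)
    (hT : 0 < T) (hA : 0 < A) (hB : 0 < B)
    (hE' : T - lam * A + B = 0)
    (hP : ((N : ℝ) - 2) / (2 * N) * T - lam / p * A + 1 / q * B ≤ 0) :
    p < q ∨ p < 2 * N / ((N : ℝ) - 2) := by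
  have hn : (3:ℝ) ≤ (N:ℝ) := by exact_mod_cast hN
  rcases lt_or_gt_of_ne hpq with h | h
  · exact Or.inl h
  · right
    have hn2 : (0:ℝ) < (N:ℝ) - 2 := by linarith
    have h2N : (0:ℝ) < 2 * (N:ℝ) := by linarith
    rw [lt_div_iff₀ hn2]
    have hlamA : lam * A = T + B := by linarith
    have key := mul_le_mul_of_nonneg_left hP (le_of_lt (by positivity : (0:ℝ) < 2 * N * p * q))
    have key2 : ((N:ℝ)-2) * p * q * T - 2 * N * q * (T + B) + 2 * N * p * B ≤ 0 := by
      rw [← hlamA]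
      field_simp at key
      nlinarith [key]
    nlinarith [mul_pos hT hq, mul_pos (mul_pos h2N hB) (sub_pos.mpr h)]
end

section
/- Let N be a positive integer, let p, q > 0 be real, and let T, A, B, λ be real numbers with T > 0, T − λA + B = 0 and ((N−2)/(2N))·T − (λ/p)·A + (1/q)·B ≤ 0. If d*(p,q) = N(p−2)(q−2) − 2pq > 0, then E″ = T − (p−1)λA + (q−1)B satisfies E″ ≥ d*(p,q)·T/(2N) > 0. (This is the bounded-domain part of Theorem 2(2°): under the Pohozaev sign condition P ≤ 0, solutions with d*(p,q) > 0 have positive second fibering derivative.) -/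
/-- Theorem 2(2°), bounded-domain part: if `E' = 0`, `P ≤ 0`, `T > 0` and
`d*(p,q) > 0`, then `E'' ≥ d*(p,q) * T / (2N) > 0`. -/
theorem second_derivative_positive_bounded (N : ℕ) (hN : 0 < N) (p q T A B lam : ℝ)
    (hp : 0 < p) (hq : 0 < q) (hT : 0 < T)
    (hE' : T - lam * A + B = 0)
    (hP : ((N : ℝ) - 2) / (2 * N) * T - lam / p * A + 1 / q * B ≤ 0)
    (hd : 0 < (N : ℝ) * (p - 2) * (q - 2) - 2 * p * q) :
    ((N : ℝ) * (p - 2) * (q - 2) - 2 * p * q) * T / (2 * N) ≤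
      T - (p - 1) * lam * A + (q - 1) * B ∧
    0 < ((N : ℝ) * (p - 2) * (q - 2) - 2 * p * q) * T / (2 * N) := by
  have hN' : (0:ℝ) < N := by exact_mod_cast hN
  have key : T - (p - 1) * lam * A + (q - 1) * B =
      ((N : ℝ) * (p - 2) * (q - 2) - 2 * p * q) * T / (2 * N)
        - p * q * (((N : ℝ) - 2) / (2 * N) * T - lam / p * A + 1 / q * B)
        + (p + q - 1) * (T - lam * A + B) := by
    field_simp
    ring
  have hpq : 0 < p * q := mul_pos hp hq
  have h1 : p * q * (((N : ℝ) - 2) / (2 * N) * T - lam / p * A + 1 / q * B) ≤ 0 :=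
    mul_nonpos_of_nonneg_of_nonpos hpq.le hP
  constructor
  · rw [key, hE']
    linarith
  · positivity
end

section
/- Let N ≥ 3 be an integer, let p, q > 0 be real with p ≠ q, let λ > 0, and suppose T > 0, A > 0, B > 0 are real numbers satisfying T − λA + B = 0 and ((N−2)/(2N))·T − (λ/p)·A + (1/q)·B ≥ 0. Then q < p or 2N/(N−2) < p. (This is the necessary condition of Theorem 3 for existence of a nontrivial nonnegative solution of −Δu = λ|u|^{p−2}u − |u|^{q−2}u on the exterior of a bounded star-shaped domain, N ≥ 3: either 0 < q < p or 2* < p < q.) -/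
/-- Necessary condition of Theorem 3 (exterior domain, `N ≥ 3`):
if `E' = 0` and `P ≥ 0` with `T, A, B > 0`, then `q < p` or `2* < p`. -/
theorem necessary_condition_exterior (N : ℕ) (hN : 3 ≤ N) (p q lam T A B : ℝ)
    (hp : 0 < p) (hq : 0 < q) (hpq : p ≠ q) (hlam : 0 < lam)
    (hT : 0 < T) (hA : 0 < A) (hB : 0 < B)
    (hE' : T - lam * A + B = 0)
    (hP : 0 ≤ ((N : ℝ) - 2) / (2 * N) * T - lam / p * A + 1 / q * B) :
    q < p ∨ 2 * N / ((N : ℝ) - 2) < p := by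
  by_contra h
  push_neg at h
  obtain ⟨h1, h2⟩ := h
  have hpq' : p < q := lt_of_le_of_ne h1 hpq
  have hN3 : (3:ℝ) ≤ (N:ℝ) := by exact_mod_cast hN
  have hN2 : (0:ℝ) < (N:ℝ) - 2 := by linarith
  have hNpos : (0:ℝ) < 2 * (N:ℝ) := by linarith
  -- from h2 : 2N/(N-2) ≥ p, so p*(N-2) ≤ 2N
  have h2' : p * ((N:ℝ) - 2) ≤ 2 * N := by
    rw [le_div_iff₀ hN2] at h2
    linarith
  have hlamA : lam * A = T + B := by linarith
  have key : ((N:ℝ) - 2) / (2 * N) * T - (T + B) / p + B / q < 0 := by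
    have e1 : ((N:ℝ) - 2) / (2 * N) ≤ 1 / p := by
      rw [div_le_div_iff₀ hNpos hp]
      nlinarith
    have e2 : 1 / q < 1 / p := by
      exact one_div_lt_one_div_of_lt hp hpq'
    have : ((N:ℝ) - 2) / (2 * N) * T - (T + B) / p + B / q
        = (((N:ℝ) - 2) / (2 * N) - 1 / p) * T + (1 / q - 1 / p) * B := by
      field_simp
      ring
    rw [this]
    have t1 : (((N:ℝ) - 2) / (2 * N) - 1 / p) * T ≤ 0 :=
      mul_nonpos_of_nonpos_of_nonneg (by linarith) hT.le
    have t2 : (1 / q - 1 / p) * B < 0 :=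
      mul_neg_of_neg_of_pos (by linarith) hB
    linarith
  have : lam / p * A = (T + B) / p := by
    rw [div_mul_eq_mul_div, hlamA]
  have e : (1:ℝ) / q * B = B / q := by ring
  linarith [hP, key, this, e]
end

section
/- Let N be a positive integer, let p, q > 0 be real, and let T, A, B, λ be real numbers with T > 0, T − λA + B = 0 and ((N−2)/(2N))·T − (λ/p)·A + (1/q)·B ≥ 0. If d*(p,q) = N(p−2)(q−2) − 2pq ≤ 0, then E″ = T − (p−1)λA + (q−1)B satisfies E″ ≤ d*(p,q)·T/(2N) ≤ 0; in particular, if d*(p,q) < 0 then E″ < 0. (This is the exterior-domain part of Theorem 3(2°): under the Pohozaev sign condition P ≥ 0, solutions with d*(p,q) < 0 have negative second fibering derivative.) -/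
/-- Theorem 3(2°), exterior-domain part: if `E' = 0`, `P ≥ 0`, `T > 0` and
`d*(p,q) ≤ 0`, then `E'' ≤ d*(p,q) * T / (2N) ≤ 0`; in particular `d* < 0 → E'' < 0`. -/
theorem second_derivative_negative_exterior (N : ℕ) (hN : 0 < N) (p q T A B lam : ℝ)
    (hp : 0 < p) (hq : 0 < q) (hT : 0 < T)
    (hE' : T - lam * A + B = 0)
    (hP : 0 ≤ ((N : ℝ) - 2) / (2 * N) * T - lam / p * A + 1 / q * B)
    (hd : (N : ℝ) * (p - 2) * (q - 2) - 2 * p * q ≤ 0) :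
    T - (p - 1) * lam * A + (q - 1) * B ≤
      ((N : ℝ) * (p - 2) * (q - 2) - 2 * p * q) * T / (2 * N) ∧
    ((N : ℝ) * (p - 2) * (q - 2) - 2 * p * q) * T / (2 * N) ≤ 0 ∧
    ((N : ℝ) * (p - 2) * (q - 2) - 2 * p * q < 0 →
      T - (p - 1) * lam * A + (q - 1) * B < 0) := by
  have hNR : (0:ℝ) < N := by exact_mod_cast hN
  have h2N : (0:ℝ) < 2 * N := by linarith
  have hPeq : ((N : ℝ) - 2) / (2 * N) * T - lam / p * A + 1 / q * B =
      (p * q * ((N : ℝ) - 2) * T - 2 * N * q * (lam * A) + 2 * N * p * B) / (2 * N * p * q) := by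
    field_simp
  have hQ : 0 ≤ p * q * ((N : ℝ) - 2) * T - 2 * N * q * (lam * A) + 2 * N * p * B := by
    rw [hPeq, le_div_iff₀ (by positivity)] at hP
    linarith
  have hlA : lam * A = T + B := by linarith
  have key : T - (p - 1) * lam * A + (q - 1) * B ≤
      ((N : ℝ) * (p - 2) * (q - 2) - 2 * p * q) * T / (2 * N) := by
    have hQ' : 0 ≤ p * q * ((N : ℝ) - 2) * T - 2 * N * q * (T + B) + 2 * N * p * B := by
      rw [← hlA]; exact hQ
    have hE2 : T - (p - 1) * lam * A + (q - 1) * B = (2 - p) * T + (q - p) * B := by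
      rw [mul_assoc, hlA]; ring
    rw [le_div_iff₀ h2N, hE2]
    nlinarith [hQ']
  have hle0 : ((N : ℝ) * (p - 2) * (q - 2) - 2 * p * q) * T / (2 * N) ≤ 0 :=
    div_nonpos_of_nonpos_of_nonneg (mul_nonpos_of_nonpos_of_nonneg hd hT.le) h2N.le
  refine ⟨key, hle0, fun hlt => ?_⟩
  have : ((N : ℝ) * (p - 2) * (q - 2) - 2 * p * q) * T / (2 * N) < 0 :=
    div_neg_of_neg_of_pos (mul_neg_of_neg_of_pos hlt hT) h2N
  linarith
end

section
/- Let T, A, B > 0, λ > 0 and let p, q > 0 be real with p < min(2, q). Then there exists a unique r > 0 with f_λ′(r) = r·T − λ·r^{p−1}·A + r^{q−1}·B = 0, and at this r one has f_λ″(r) = T − (p−1)·λ·r^{p−2}·A + (q−1)·r^{q−2}·B > 0. (This is property (F1) of the fibering map in the sublinear case: a unique nonzero stationary point, which is a nondegenerate minimum.) -/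
/-- Property (F1), sublinear case `p < min 2 q`: the fibering map has a unique
nonzero stationary point, which is a nondegenerate minimum. -/
theorem fibering_F1_min (T A B lam p q : ℝ) (hT : 0 < T) (hA : 0 < A) (hB : 0 < B)
    (hlam : 0 < lam) (hp : 0 < p) (hq : 0 < q) (hpq : p < min 2 q) :
    ∃ r : ℝ, 0 < r ∧
      r * T - lam * r ^ (p - 1) * A + r ^ (q - 1) * B = 0 ∧
      0 < T - (p - 1) * lam * r ^ (p - 2) * A + (q - 1) * r ^ (q - 2) * B ∧
      ∀ r' : ℝ, 0 < r' →
        r' * T - lam * r' ^ (p - 1) * A + r' ^ (q - 1) * B = 0 → r' = r := by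
  have hp2 : p < 2 := lt_of_lt_of_le hpq (min_le_left _ _)
  have hpq' : p < q := lt_of_lt_of_le hpq (min_le_right _ _)
  have h2p : 0 < 2 - p := by linarith
  have hqp : 0 < q - p := by linarith
  set h : ℝ → ℝ := fun r => T * r ^ (2 - p) + B * r ^ (q - p) - lam * A with hdef
  -- key factorization
  have key : ∀ r : ℝ, 0 < r →
      r * T - lam * r ^ (p - 1) * A + r ^ (q - 1) * B = r ^ (p - 1) * h r := by
    intro r hr
    have h1 : r ^ (p - 1) * r ^ (2 - p) = r := by
      rw [← Real.rpow_add hr, show p - 1 + (2 - p) = 1 by ring, Real.rpow_one]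
    have h2 : r ^ (p - 1) * r ^ (q - p) = r ^ (q - 1) := by
      rw [← Real.rpow_add hr, show p - 1 + (q - p) = q - 1 by ring]
    simp only [hdef]
    calc r * T - lam * r ^ (p - 1) * A + r ^ (q - 1) * B
        = T * (r ^ (p - 1) * r ^ (2 - p)) + B * (r ^ (p - 1) * r ^ (q - p))
            - lam * A * r ^ (p - 1) := by rw [h1, h2]; ring
      _ = r ^ (p - 1) * (T * r ^ (2 - p) + B * r ^ (q - p) - lam * A) := by ring
  -- strict monotonicity of h on [0, ∞)
  have hmono : StrictMonoOn h (Set.Ici 0) := by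
    intro a ha b hb hab
    have h1 := Real.rpow_lt_rpow ha hab h2p
    have h2 := Real.rpow_lt_rpow ha hab hqp
    simp only [hdef]
    have := mul_lt_mul_of_pos_left h1 hT
    have := mul_lt_mul_of_pos_left h2 hB
    linarith
  -- continuity of h
  have hcont : Continuous h := by
    have c1 : Continuous fun r : ℝ => r ^ (2 - p) := by
      rw [continuous_iff_continuousAt]
      intro x
      rcases eq_or_ne x 0 with rfl | hx
      · exact Real.continuousAt_rpow_const 0 _ (Or.inr h2p.le)
      · exact Real.continuousAt_rpow_const x _ (Or.inl hx)
    have c2 : Continuous fun r : ℝ => r ^ (q - p) := by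
      rw [continuous_iff_continuousAt]
      intro x
      rcases eq_or_ne x 0 with rfl | hx
      · exact Real.continuousAt_rpow_const 0 _ (Or.inr hqp.le)
      · exact Real.continuousAt_rpow_const x _ (Or.inl hx)
    exact ((continuous_const.mul c1).add (continuous_const.mul c2)).sub continuous_const
  -- value at 0
  have hzero : h 0 = -(lam * A) := by
    simp [hdef, Real.zero_rpow (ne_of_gt h2p), Real.zero_rpow (ne_of_gt hqp)]
  -- large value
  set M : ℝ := (lam * A / T + 1) ^ ((2 - p)⁻¹) with hMdef
  have hMpos : 0 < M := by
    apply Real.rpow_pos_of_pos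
    positivity
  have hMval : lam * A / T < M ^ (2 - p) := by
    rw [hMdef, ← Real.rpow_mul (by positivity), inv_mul_cancel₀ (ne_of_gt h2p), Real.rpow_one]
    linarith
  have hM : 0 ≤ h M := by
    have h1 : lam * A < T * M ^ (2 - p) := by
      rw [div_lt_iff₀ hT] at hMval
      nlinarith [hMval]
    have h2 : 0 ≤ B * M ^ (q - p) := by positivity
    simp only [hdef]; linarith
  -- IVT to get a root of h
  have h0le : h 0 ≤ 0 := by rw [hzero]; nlinarith
  obtain ⟨r, hrmem, hr0⟩ : ∃ r ∈ Set.Icc (0 : ℝ) M, h r = 0 := by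
    have := intermediate_value_Icc (le_of_lt hMpos) hcont.continuousOn
    have hmem : (0 : ℝ) ∈ Set.Icc (h 0) (h M) := ⟨h0le, hM⟩
    obtain ⟨r, hr, hr0⟩ := this hmem
    exact ⟨r, hr, hr0⟩
  have hrpos : 0 < r := by
    rcases lt_or_eq_of_le hrmem.1 with h | h
    · exact h
    · exfalso; rw [← h] at hr0; rw [hzero] at hr0; nlinarith
  refine ⟨r, hrpos, ?_, ?_, ?_⟩
  · rw [key r hrpos, hr0, mul_zero]
  · -- second derivative positivity
    have heq : r * T - lam * r ^ (p - 1) * A + r ^ (q - 1) * B = 0 := by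
      rw [key r hrpos, hr0, mul_zero]
    have e1 : r ^ (p - 1) = r ^ (p - 2) * r := by
      rw [show p - 1 = p - 2 + 1 by ring, Real.rpow_add hrpos, Real.rpow_one]
    have e2 : r ^ (q - 1) = r ^ (q - 2) * r := by
      rw [show q - 1 = q - 2 + 1 by ring, Real.rpow_add hrpos, Real.rpow_one]
    rw [e1, e2] at heq
    have heq2 : lam * r ^ (p - 2) * A = T + r ^ (q - 2) * B := by
      have h' : (T - lam * r ^ (p - 2) * A + r ^ (q - 2) * B) * r = 0 * r := by
        rw [zero_mul]; linarith [heq]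
      have := mul_right_cancel₀ hrpos.ne' h'
      linarith
    have hX : 0 < r ^ (q - 2) * B := by positivity
    nlinarith [mul_pos h2p hT, mul_pos hqp hX]
  · -- uniqueness
    intro r' hr' heq'
    have hr'0 : h r' = 0 := by
      have := key r' hr'
      rw [heq'] at this
      have hpow : (0 : ℝ) < r' ^ (p - 1) := Real.rpow_pos_of_pos hr' _
      have := this.symm
      rcases mul_eq_zero.mp this with h | h
      · exact absurd h (ne_of_gt hpow)
      · exact h
    exact hmono.injOn (Set.mem_Ici.mpr hr'.le) (Set.mem_Ici.mpr hrpos.le)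
      (by rw [hr'0, hr0])
end

section
/- Let T, A, B > 0, λ > 0 and let p, q > 0 be real with p > max(2, q). Then there exists a unique r > 0 with f_λ′(r) = r·T − λ·r^{p−1}·A + r^{q−1}·B = 0, and at this r one has f_λ″(r) = T − (p−1)·λ·r^{p−2}·A + (q−1)·r^{q−2}·B < 0. (This is property (F1) of the fibering map in the superlinear case: a unique nonzero stationary point, which is a nondegenerate maximum.) -/
open Real

/-- Factorization of the stationary equation. -/
private lemma fib_key (T A B lam p q r : ℝ) (hr : 0 < r) :
    r * T - lam * r ^ (p - 1) * A + r ^ (q - 1) * B =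
      (T * r ^ (2 - p) + B * r ^ (q - p) - lam * A) * r ^ (p - 1) := by
  have hmul : ∀ a b : ℝ, r ^ a * r ^ b = r ^ (a + b) :=
    fun a b => (Real.rpow_add hr a b).symm
  have h1 : r ^ (2 - p) * r ^ (p - 1) = r := by
    rw [hmul, show (2 - p) + (p - 1) = (1:ℝ) by ring, Real.rpow_one]
  have h2 : r ^ (q - p) * r ^ (p - 1) = r ^ (q - 1) := by
    rw [hmul, show (q - p) + (p - 1) = q - 1 by ring]
  linear_combination (-T) * h1 - B * h2

private lemma fib_anti (T B p q : ℝ) (hT : 0 < T) (hB : 0 < B) (hp2 : 2 < p)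
    (hqp : q < p) {x y : ℝ} (hx : 0 < x) (hxy : x < y) :
    T * y ^ (2 - p) + B * y ^ (q - p) < T * x ^ (2 - p) + B * x ^ (q - p) := by
  have h1 : y ^ (2 - p) < x ^ (2 - p) :=
    Real.rpow_lt_rpow_of_neg hx hxy (by linarith)
  have h2 : y ^ (q - p) < x ^ (q - p) :=
    Real.rpow_lt_rpow_of_neg hx hxy (by linarith)
  nlinarith

/-- Property (F1), superlinear case `p > max 2 q`: the fibering map has a unique
nonzero stationary point, which is a nondegenerate maximum. -/
theorem fibering_F1_max (T A B lam p q : ℝ) (hT : 0 < T) (hA : 0 < A) (hB : 0 < B)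
    (hlam : 0 < lam) (hp : 0 < p) (hq : 0 < q) (hpq : max 2 q < p) :
    ∃ r : ℝ, 0 < r ∧
      r * T - lam * r ^ (p - 1) * A + r ^ (q - 1) * B = 0 ∧
      T - (p - 1) * lam * r ^ (p - 2) * A + (q - 1) * r ^ (q - 2) * B < 0 ∧
      ∀ r' : ℝ, 0 < r' →
        r' * T - lam * r' ^ (p - 1) * A + r' ^ (q - 1) * B = 0 → r' = r := by
  have hp2 : 2 < p := lt_of_le_of_lt (le_max_left _ _) hpq
  have hqp : q < p := lt_of_le_of_lt (le_max_right _ _) hpq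
  set c := lam * A with hc
  have hcpos : 0 < c := mul_pos hlam hA
  set v : ℝ → ℝ := fun r => T * r ^ (2 - p) + B * r ^ (q - p) with hv
  set a : ℝ := min 1 ((B / c) ^ (1 / (p - q))) with ha
  set b : ℝ := max 1 (max ((2 * T / c) ^ (1 / (p - 2))) ((2 * B / c) ^ (1 / (p - q)))) with hb
  have hpq0 : (0:ℝ) < p - q := by linarith
  have hp20 : (0:ℝ) < p - 2 := by linarith
  have hapos : 0 < a := by
    apply lt_min one_pos
    exact Real.rpow_pos_of_pos (div_pos hB hcpos) _
  have hab : a ≤ b := le_trans (min_le_left _ _) (le_max_left _ _)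
  have hbpos : 0 < b := lt_of_lt_of_le hapos hab
  -- v a ≥ c
  have hva : c ≤ v a := by
    have h1 : a ^ (p - q) ≤ B / c := by
      have hle : a ≤ (B / c) ^ (1 / (p - q)) := min_le_right _ _
      calc a ^ (p - q) ≤ ((B / c) ^ (1 / (p - q))) ^ (p - q) :=
            Real.rpow_le_rpow (le_of_lt hapos) hle (le_of_lt hpq0)
        _ = B / c := by
            rw [← Real.rpow_mul (le_of_lt (div_pos hB hcpos)), one_div,
              inv_mul_cancel₀ (ne_of_gt hpq0), Real.rpow_one]
    have hane : (0:ℝ) < a ^ (p - q) := Real.rpow_pos_of_pos hapos _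
    have h2 : c ≤ B * a ^ (q - p) := by
      have hinv : a ^ (q - p) = (a ^ (p - q))⁻¹ := by
        rw [← Real.rpow_neg (le_of_lt hapos)]; congr 1; ring
      rw [hinv, ← div_eq_mul_inv, le_div_iff₀ hane]
      have := (le_div_iff₀ hcpos).mp h1
      linarith
    have h3 : 0 < T * a ^ (2 - p) := mul_pos hT (Real.rpow_pos_of_pos hapos _)
    simp only [hv]; linarith
  -- v b ≤ c
  have hvb : v b ≤ c := by
    have hTb : T * b ^ (2 - p) ≤ c / 2 := by
      have hx : (2 * T / c) ^ (1 / (p - 2)) ≤ b :=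
        le_trans (le_max_left _ _) (le_max_right _ _)
      have hxpos : (0:ℝ) < 2 * T / c := by positivity
      have h1 : 2 * T / c ≤ b ^ (p - 2) := by
        calc 2 * T / c = ((2 * T / c) ^ (1 / (p - 2))) ^ (p - 2) := by
              rw [← Real.rpow_mul (le_of_lt hxpos), one_div,
                inv_mul_cancel₀ (ne_of_gt hp20), Real.rpow_one]
          _ ≤ b ^ (p - 2) :=
              Real.rpow_le_rpow (Real.rpow_pos_of_pos hxpos _).le hx hp20.le
      have hbp : 0 < b ^ (p - 2) := Real.rpow_pos_of_pos hbpos _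
      have hinv : b ^ (2 - p) = (b ^ (p - 2))⁻¹ := by
        rw [← Real.rpow_neg (le_of_lt hbpos)]; congr 1; ring
      rw [hinv, ← div_eq_mul_inv, div_le_div_iff₀ hbp two_pos]
      rw [div_le_iff₀ hcpos] at h1
      nlinarith
    have hBb : B * b ^ (q - p) ≤ c / 2 := by
      have hx : (2 * B / c) ^ (1 / (p - q)) ≤ b :=
        le_trans (le_max_right _ _) (le_max_right _ _)
      have hxpos : (0:ℝ) < 2 * B / c := by positivity
      have h1 : 2 * B / c ≤ b ^ (p - q) := by
        calc 2 * B / c = ((2 * B / c) ^ (1 / (p - q))) ^ (p - q) := by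
              rw [← Real.rpow_mul (le_of_lt hxpos), one_div,
                inv_mul_cancel₀ (ne_of_gt hpq0), Real.rpow_one]
          _ ≤ b ^ (p - q) :=
              Real.rpow_le_rpow (Real.rpow_pos_of_pos hxpos _).le hx hpq0.le
      have hbp : 0 < b ^ (p - q) := Real.rpow_pos_of_pos hbpos _
      have hinv : b ^ (q - p) = (b ^ (p - q))⁻¹ := by
        rw [← Real.rpow_neg (le_of_lt hbpos)]; congr 1; ring
      rw [hinv, ← div_eq_mul_inv, div_le_div_iff₀ hbp two_pos]
      rw [div_le_iff₀ hcpos] at h1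
      nlinarith
    simp only [hv]; linarith
  -- IVT
  have hcont : ContinuousOn v (Set.Icc a b) := by
    apply continuousOn_of_forall_continuousAt
    intro x hx
    have hxpos : 0 < x := lt_of_lt_of_le hapos hx.1
    exact (continuousAt_const.mul
        (Real.continuousAt_rpow_const x _ (Or.inl hxpos.ne'))).add
      (continuousAt_const.mul
        (Real.continuousAt_rpow_const x _ (Or.inl hxpos.ne')))
  have hmem : c ∈ Set.Icc (v b) (v a) := ⟨hvb, hva⟩
  obtain ⟨r, hrmem, hvr⟩ := intermediate_value_Icc' hab hcont hmem
  have hrpos : 0 < r := lt_of_lt_of_le hapos hrmem.1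
  have hzero : T * r ^ (2 - p) + B * r ^ (q - p) - lam * A = 0 := by
    simp only [hv] at hvr
    rw [hc] at hvr
    linarith
  have heq : r * T - lam * r ^ (p - 1) * A + r ^ (q - 1) * B = 0 := by
    rw [fib_key T A B lam p q r hrpos, hzero, zero_mul]
  refine ⟨r, hrpos, heq, ?_, ?_⟩
  · -- second derivative negative
    have hr1 : r ^ (p - 1) = r ^ (p - 2) * r := by
      rw [show p - 1 = (p - 2) + 1 by ring, Real.rpow_add hrpos, Real.rpow_one]
    have hr2 : r ^ (q - 1) = r ^ (q - 2) * r := by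
      rw [show q - 1 = (q - 2) + 1 by ring, Real.rpow_add hrpos, Real.rpow_one]
    have heq' := heq
    rw [hr1, hr2] at heq'
    have hkey : lam * r ^ (p - 2) * A = T + r ^ (q - 2) * B := by
      apply mul_right_cancel₀ (ne_of_gt hrpos)
      linear_combination -heq'
    have hq2pos : 0 < r ^ (q - 2) := Real.rpow_pos_of_pos hrpos _
    have hgoal : T - (p - 1) * lam * r ^ (p - 2) * A + (q - 1) * r ^ (q - 2) * B =
        (2 - p) * T + (q - p) * (r ^ (q - 2) * B) := by
      linear_combination (1 - p) * hkey
    rw [hgoal]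
    have ha1 : 0 < (p - 2) * T := mul_pos (by linarith) hT
    have ha2 : 0 < (p - q) * (r ^ (q - 2) * B) :=
      mul_pos (by linarith) (mul_pos hq2pos hB)
    linarith
  · intro r' hr' heq'
    have hvr' : v r' = c := by
      rw [fib_key T A B lam p q r' hr'] at heq'
      have hne : r' ^ (p - 1) ≠ 0 := ne_of_gt (Real.rpow_pos_of_pos hr' _)
      have h0 := (mul_eq_zero.mp heq').resolve_right hne
      simp only [hv]
      rw [hc]
      linarith
    rcases lt_trichotomy r' r with h | h | h
    · exfalso
      have := fib_anti T B p q hT hB hp2 hqp hr' h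
      simp only [hv] at hvr hvr'
      linarith
    · exact h
    · exfalso
      have := fib_anti T B p q hT hB hp2 hqp hrpos h
      simp only [hv] at hvr hvr'
      linarith
end

section
/- Let T, A, B > 0 and let p, q be real with either 1 < q < p < 2 or 2 < p < q. Then there exists λ* > 0 (depending on T, A, B, p, q) such that: (i) for every λ with 0 < λ < λ*, f_λ′(r) ≠ 0 for all r > 0; (ii) for λ = λ*, there is exactly one r > 0 with f_λ′(r) = 0, and at this r one has f_λ″(r) = 0; (iii) for every λ > λ*, there are exactly two points 0 < r₁ < r₂ with f_λ′(r₁) = f_λ′(r₂) = 0, and f_λ″(r₁) < 0 while f_λ″(r₂) > 0. (This is property (F2) of the fibering map: a fold threshold λ* below which there are no nonzero stationary points and above which there are exactly two, a maximum and a minimum.) -/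
open Set

private lemma contOn_H (C D u v : ℝ) :
    ContinuousOn (fun r : ℝ => C * r ^ u + D * r ^ v) (Ioi 0) := by
  apply ContinuousOn.add
  · exact continuousOn_const.mul (fun x hx =>
      (Real.continuousAt_rpow_const x u (Or.inl (ne_of_gt hx))).continuousWithinAt)
  · exact continuousOn_const.mul (fun x hx =>
      (Real.continuousAt_rpow_const x v (Or.inl (ne_of_gt hx))).continuousWithinAt)

private lemma genFold (C D u v : ℝ) (hC : 0 < C) (hD : 0 < D) (hu : u < 0) (hv : 0 < v) :
    ∃ ρ : ℝ, 0 < ρ ∧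
      (∀ r, 0 < r → r < ρ → u * C + v * D * r ^ (v - u) < 0) ∧
      u * C + v * D * ρ ^ (v - u) = 0 ∧
      (∀ r, ρ < r → 0 < u * C + v * D * r ^ (v - u)) ∧
      StrictAntiOn (fun r : ℝ => C * r ^ u + D * r ^ v) (Ioc 0 ρ) ∧
      StrictMonoOn (fun r : ℝ => C * r ^ u + D * r ^ v) (Ici ρ) ∧
      (∀ r, 0 < r → C * ρ ^ u + D * ρ ^ v ≤ C * r ^ u + D * r ^ v) ∧
      (∀ M, 0 < M → ∃ r₀, 0 < r₀ ∧ r₀ < ρ ∧ M ≤ C * r₀ ^ u + D * r₀ ^ v) ∧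
      (∀ M, 0 < M → ∃ R, ρ < R ∧ M ≤ C * R ^ u + D * R ^ v) := by
  have hvu : 0 < v - u := by linarith
  set K := (-u) * C / (v * D) with hK
  have hKpos : 0 < K := div_pos (by nlinarith) (by positivity)
  set ρ := K ^ (v - u)⁻¹ with hρdef
  have hρ : 0 < ρ := Real.rpow_pos_of_pos hKpos _
  have hρpow : ρ ^ (v - u) = K := by
    rw [hρdef, ← Real.rpow_mul hKpos.le, inv_mul_cancel₀ hvu.ne', Real.rpow_one]
  have hvD : (v * D) ≠ 0 := by positivity
  have hSρ : u * C + v * D * ρ ^ (v - u) = 0 := by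
    rw [hρpow, hK]
    field_simp
    ring
  have hSlt : ∀ r, 0 < r → r < ρ → u * C + v * D * r ^ (v - u) < 0 := by
    intro r hr hrρ
    have h := Real.rpow_lt_rpow hr.le hrρ hvu
    have h2 : v * D * r ^ (v - u) < v * D * ρ ^ (v - u) :=
      mul_lt_mul_of_pos_left h (by positivity)
    linarith
  have hSgt : ∀ r, ρ < r → 0 < u * C + v * D * r ^ (v - u) := by
    intro r hrρ
    have h := Real.rpow_lt_rpow hρ.le hrρ hvu
    have h2 : v * D * ρ ^ (v - u) < v * D * r ^ (v - u) :=
      mul_lt_mul_of_pos_left h (by positivity)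
    linarith
  have hderiv : ∀ r : ℝ, 0 < r →
      HasDerivAt (fun r : ℝ => C * r ^ u + D * r ^ v)
        (r ^ (u - 1) * (u * C + v * D * r ^ (v - u))) r := by
    intro r hr
    have h1 := (Real.hasDerivAt_rpow_const (x := r) (p := u) (Or.inl hr.ne')).const_mul C
    have h2 := (Real.hasDerivAt_rpow_const (x := r) (p := v) (Or.inl hr.ne')).const_mul D
    refine HasDerivAt.congr_deriv (h1.add h2) ?_
    symm
    have e1 : r ^ (u - 1) * r ^ (v - u) = r ^ (v - 1) := by
      rw [← Real.rpow_add hr, show u - 1 + (v - u) = v - 1 by ring]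
    calc r ^ (u - 1) * (u * C + v * D * r ^ (v - u))
        = C * (u * r ^ (u - 1)) + D * (v * (r ^ (u - 1) * r ^ (v - u))) := by ring
      _ = C * (u * r ^ (u - 1)) + D * (v * r ^ (v - 1)) := by rw [e1]
  have hanti : StrictAntiOn (fun r : ℝ => C * r ^ u + D * r ^ v) (Ioc 0 ρ) := by
    apply strictAntiOn_of_deriv_neg (convex_Ioc 0 ρ)
      ((contOn_H C D u v).mono Ioc_subset_Ioi_self)
    intro x hx
    rw [interior_Ioc] at hx
    rw [(hderiv x hx.1).deriv]
    exact mul_neg_of_pos_of_neg (Real.rpow_pos_of_pos hx.1 _) (hSlt x hx.1 hx.2)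
  have hmono : StrictMonoOn (fun r : ℝ => C * r ^ u + D * r ^ v) (Ici ρ) := by
    apply strictMonoOn_of_deriv_pos (convex_Ici ρ)
      ((contOn_H C D u v).mono (fun x hx => lt_of_lt_of_le hρ hx))
    intro x hx
    rw [interior_Ici] at hx
    rw [(hderiv x (lt_trans hρ hx)).deriv]
    exact mul_pos (Real.rpow_pos_of_pos (lt_trans hρ hx) _) (hSgt x hx)
  have hmin : ∀ r, 0 < r → C * ρ ^ u + D * ρ ^ v ≤ C * r ^ u + D * r ^ v := by
    intro r hr
    rcases lt_trichotomy r ρ with h | h | h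
    · exact (hanti ⟨hr, h.le⟩ ⟨hρ, le_rfl⟩ h).le
    · rw [h]
    · exact (hmono self_mem_Ici h.le h).le
  refine ⟨ρ, hρ, hSlt, hSρ, hSgt, hanti, hmono, hmin, ?_, ?_⟩
  · intro M hM
    set s := (M / C) ^ u⁻¹ with hs
    have hspos : 0 < s := Real.rpow_pos_of_pos (div_pos hM hC) _
    have hminpos : 0 < min (ρ / 2) s := lt_min (by positivity) hspos
    refine ⟨min (ρ / 2) s, hminpos, lt_of_le_of_lt (min_le_left _ _) (by linarith), ?_⟩
    have h2 : s ^ u ≤ (min (ρ / 2) s) ^ u :=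
      Real.rpow_le_rpow_of_nonpos hminpos (min_le_right _ _) hu.le
    have h3 : s ^ u = M / C := by
      rw [hs, ← Real.rpow_mul (div_pos hM hC).le, inv_mul_cancel₀ hu.ne, Real.rpow_one]
    have h4 : M / C ≤ (min (ρ / 2) s) ^ u := h3 ▸ h2
    have h5 : M ≤ C * (min (ρ / 2) s) ^ u := by
      rw [div_le_iff₀ hC] at h4; linarith
    have h6 : 0 < D * (min (ρ / 2) s) ^ v :=
      mul_pos hD (Real.rpow_pos_of_pos hminpos _)
    linarith
  · intro M hM
    set s := (M / D) ^ v⁻¹ with hs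
    have hspos : 0 < s := Real.rpow_pos_of_pos (div_pos hM hD) _
    have hRρ : ρ < max (ρ + 1) s := lt_of_lt_of_le (by linarith) (le_max_left _ _)
    refine ⟨max (ρ + 1) s, hRρ, ?_⟩
    have h2 : s ^ v ≤ (max (ρ + 1) s) ^ v :=
      Real.rpow_le_rpow hspos.le (le_max_right _ _) hv.le
    have h3 : s ^ v = M / D := by
      rw [hs, ← Real.rpow_mul (div_pos hM hD).le, inv_mul_cancel₀ hv.ne', Real.rpow_one]
    have h4 : M / D ≤ (max (ρ + 1) s) ^ v := h3 ▸ h2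
    have h5 : M ≤ D * (max (ρ + 1) s) ^ v := by
      rw [div_le_iff₀ hD] at h4; linarith
    have h6 : 0 < C * (max (ρ + 1) s) ^ u :=
      mul_pos hC (Real.rpow_pos_of_pos (lt_trans hρ hRρ) _)
    linarith

private lemma auxF2 (T A B p q C D u v e : ℝ) (hT : 0 < T) (hA : 0 < A) (hB : 0 < B)
    (hC : 0 < C) (hD : 0 < D) (hu : u < 0) (hv : 0 < v)
    (h1 : ∀ r : ℝ, 0 < r →
      r ^ (p - 1) * (C * r ^ u + D * r ^ v) = r * T + r ^ (q - 1) * B)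
    (h2 : ∀ r L : ℝ, 0 < r → C * r ^ u + D * r ^ v = L * A →
      T - (p - 1) * L * r ^ (p - 2) * A + (q - 1) * r ^ (q - 2) * B
        = r ^ e * (u * C + v * D * r ^ (v - u))) :
    ∃ lamStar : ℝ, 0 < lamStar ∧
      (∀ lam : ℝ, 0 < lam → lam < lamStar → ∀ r : ℝ, 0 < r →
        r * T - lam * r ^ (p - 1) * A + r ^ (q - 1) * B ≠ 0) ∧
      (∃ r : ℝ, 0 < r ∧
        r * T - lamStar * r ^ (p - 1) * A + r ^ (q - 1) * B = 0 ∧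
        T - (p - 1) * lamStar * r ^ (p - 2) * A + (q - 1) * r ^ (q - 2) * B = 0 ∧
        ∀ r' : ℝ, 0 < r' →
          r' * T - lamStar * r' ^ (p - 1) * A + r' ^ (q - 1) * B = 0 → r' = r) ∧
      (∀ lam : ℝ, lamStar < lam →
        ∃ r₁ r₂ : ℝ, 0 < r₁ ∧ r₁ < r₂ ∧
          r₁ * T - lam * r₁ ^ (p - 1) * A + r₁ ^ (q - 1) * B = 0 ∧
          r₂ * T - lam * r₂ ^ (p - 1) * A + r₂ ^ (q - 1) * B = 0 ∧
          T - (p - 1) * lam * r₁ ^ (p - 2) * A + (q - 1) * r₁ ^ (q - 2) * B < 0 ∧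
          0 < T - (p - 1) * lam * r₂ ^ (p - 2) * A + (q - 1) * r₂ ^ (q - 2) * B ∧
          ∀ r : ℝ, 0 < r →
            r * T - lam * r ^ (p - 1) * A + r ^ (q - 1) * B = 0 → r = r₁ ∨ r = r₂) := by
  obtain ⟨ρ, hρ, hSlt, hSρ, hSgt, hanti, hmono, hmin, hsmall, hlarge⟩ :=
    genFold C D u v hC hD hu hv
  set H : ℝ → ℝ := fun r => C * r ^ u + D * r ^ v with hHdef
  have hHpos : ∀ r, 0 < r → 0 < H r := fun r hr =>
    add_pos (mul_pos hC (Real.rpow_pos_of_pos hr _))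
      (mul_pos hD (Real.rpow_pos_of_pos hr _))
  have key : ∀ lam r : ℝ, 0 < r →
      (r * T - lam * r ^ (p - 1) * A + r ^ (q - 1) * B = 0 ↔ H r = lam * A) := by
    intro lam r hr
    have hrp : 0 < r ^ (p - 1) := Real.rpow_pos_of_pos hr _
    have factor : r * T - lam * r ^ (p - 1) * A + r ^ (q - 1) * B
        = r ^ (p - 1) * (H r - lam * A) := by
      have expand : r ^ (p - 1) * (H r - lam * A)
          = r ^ (p - 1) * (C * r ^ u + D * r ^ v) - lam * r ^ (p - 1) * A := by
        simp only [hHdef]; ring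
      rw [expand, h1 r hr]; ring
    rw [factor, mul_eq_zero, sub_eq_zero]
    simp [hrp.ne']
  refine ⟨H ρ / A, div_pos (hHpos ρ hρ) hA, ?_, ?_, ?_⟩
  · intro lam hlam hlt r hr
    rw [Ne, key lam r hr]
    intro hEq
    have h1' : lam * A < C * ρ ^ u + D * ρ ^ v := (lt_div_iff₀ hA).1 hlt
    have h2' := hmin r hr
    have hEq' : C * r ^ u + D * r ^ v = lam * A := hEq
    linarith
  · refine ⟨ρ, hρ, ?_, ?_, ?_⟩
    · rw [key _ ρ hρ]; field_simp
    · have hz : H ρ = (H ρ / A) * A := by field_simp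
      rw [h2 ρ (H ρ / A) hρ hz, hSρ, mul_zero]
    · intro r' hr' h
      rw [key _ r' hr'] at h
      have hz : H r' = H ρ := by rw [h]; field_simp
      rcases lt_trichotomy r' ρ with hlt | heq | hgt
      · exfalso
        have h5 : C * ρ ^ u + D * ρ ^ v < C * r' ^ u + D * r' ^ v :=
          hanti ⟨hr', hlt.le⟩ ⟨hρ, le_rfl⟩ hlt
        have hz' : C * r' ^ u + D * r' ^ v = C * ρ ^ u + D * ρ ^ v := hz
        linarith
      · exact heq
      · exfalso
        have h5 : C * ρ ^ u + D * ρ ^ v < C * r' ^ u + D * r' ^ v :=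
          hmono self_mem_Ici hgt.le hgt
        have hz' : C * r' ^ u + D * r' ^ v = C * ρ ^ u + D * ρ ^ v := hz
        linarith
  · intro lam hlam
    have hlampos : 0 < lam := lt_trans (div_pos (hHpos ρ hρ) hA) hlam
    have hM : H ρ < lam * A := (div_lt_iff₀ hA).1 hlam
    have hMpos : 0 < lam * A := mul_pos hlampos hA
    obtain ⟨r₀, hr₀pos, hr₀lt, hr₀ge⟩ := hsmall (lam * A) hMpos
    obtain ⟨R, hRgt, hRge⟩ := hlarge (lam * A) hMpos
    have hIcc1 : Icc r₀ ρ ⊆ Ioi 0 := fun x hx => lt_of_lt_of_le hr₀pos hx.1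
    have hIcc2 : Icc ρ R ⊆ Ioi 0 := fun x hx => lt_of_lt_of_le hρ hx.1
    obtain ⟨r₁, hr₁mem, hr₁⟩ :=
      intermediate_value_Icc' hr₀lt.le ((contOn_H C D u v).mono hIcc1)
        (⟨hM.le, hr₀ge⟩ : lam * A ∈ Icc (H ρ) (H r₀))
    obtain ⟨r₂, hr₂mem, hr₂⟩ :=
      intermediate_value_Icc hRgt.le ((contOn_H C D u v).mono hIcc2)
        (⟨hM.le, hRge⟩ : lam * A ∈ Icc (H ρ) (H R))
    have hr₁pos : 0 < r₁ := lt_of_lt_of_le hr₀pos hr₁mem.1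
    have hr₁H : H r₁ = lam * A := hr₁
    have hr₂H : H r₂ = lam * A := hr₂
    have hr₁ltρ : r₁ < ρ := by
      rcases lt_or_eq_of_le hr₁mem.2 with h | h
      · exact h
      · exfalso; rw [h] at hr₁H; linarith
    have hρltr₂ : ρ < r₂ := by
      rcases lt_or_eq_of_le hr₂mem.1 with h | h
      · exact h
      · exfalso; rw [← h] at hr₂H; linarith
    refine ⟨r₁, r₂, hr₁pos, lt_trans hr₁ltρ hρltr₂, ?_, ?_, ?_, ?_, ?_⟩
    · rw [key lam r₁ hr₁pos]; exact hr₁H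
    · rw [key lam r₂ (lt_trans hρ hρltr₂)]; exact hr₂H
    · rw [h2 r₁ lam hr₁pos hr₁H]
      exact mul_neg_of_pos_of_neg (Real.rpow_pos_of_pos hr₁pos _)
        (hSlt r₁ hr₁pos hr₁ltρ)
    · rw [h2 r₂ lam (lt_trans hρ hρltr₂) hr₂H]
      exact mul_pos (Real.rpow_pos_of_pos (lt_trans hρ hρltr₂) _) (hSgt r₂ hρltr₂)
    · intro r hr h
      rw [key lam r hr] at h
      rcases le_or_gt r ρ with hle | hgt
      · left
        exact hanti.injOn ⟨hr, hle⟩ ⟨hr₁pos, hr₁ltρ.le⟩ (h.trans hr₁H.symm)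
      · right
        exact hmono.injOn hgt.le hρltr₂.le (h.trans hr₂H.symm)

/-- Property (F2) of the fibering map: for `1 < q < p < 2` or `2 < p < q` there is a
fold threshold `λ*` below which there are no nonzero stationary points, at which
there is exactly one (degenerate), and above which there are exactly two, a
maximum followed by a minimum. -/
theorem fibering_F2_fold (T A B p q : ℝ) (hT : 0 < T) (hA : 0 < A) (hB : 0 < B)
    (hpq : (1 < q ∧ q < p ∧ p < 2) ∨ (2 < p ∧ p < q)) :
    ∃ lamStar : ℝ, 0 < lamStar ∧
      (∀ lam : ℝ, 0 < lam → lam < lamStar → ∀ r : ℝ, 0 < r →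
        r * T - lam * r ^ (p - 1) * A + r ^ (q - 1) * B ≠ 0) ∧
      (∃ r : ℝ, 0 < r ∧
        r * T - lamStar * r ^ (p - 1) * A + r ^ (q - 1) * B = 0 ∧
        T - (p - 1) * lamStar * r ^ (p - 2) * A + (q - 1) * r ^ (q - 2) * B = 0 ∧
        ∀ r' : ℝ, 0 < r' →
          r' * T - lamStar * r' ^ (p - 1) * A + r' ^ (q - 1) * B = 0 → r' = r) ∧
      (∀ lam : ℝ, lamStar < lam →
        ∃ r₁ r₂ : ℝ, 0 < r₁ ∧ r₁ < r₂ ∧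
          r₁ * T - lam * r₁ ^ (p - 1) * A + r₁ ^ (q - 1) * B = 0 ∧
          r₂ * T - lam * r₂ ^ (p - 1) * A + r₂ ^ (q - 1) * B = 0 ∧
          T - (p - 1) * lam * r₁ ^ (p - 2) * A + (q - 1) * r₁ ^ (q - 2) * B < 0 ∧
          0 < T - (p - 1) * lam * r₂ ^ (p - 2) * A + (q - 1) * r₂ ^ (q - 2) * B ∧
          ∀ r : ℝ, 0 < r →
            r * T - lam * r ^ (p - 1) * A + r ^ (q - 1) * B = 0 → r = r₁ ∨ r = r₂) := by
  rcases hpq with ⟨hq1, hqp, hp2⟩ | ⟨hp2, hpq'⟩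
  · -- 1 < q < p < 2 : u = q - p, C = B, v = 2 - p, D = T, e = q - 2
    apply auxF2 T A B p q B T (q - p) (2 - p) (q - 2) hT hA hB hB hT
      (by linarith) (by linarith)
    · intro r hr
      have e1 : r ^ (p - 1) * r ^ (q - p) = r ^ (q - 1) := by
        rw [← Real.rpow_add hr, show p - 1 + (q - p) = q - 1 by ring]
      have e2 : r ^ (p - 1) * r ^ (2 - p) = r := by
        rw [← Real.rpow_add hr, show p - 1 + (2 - p) = 1 by ring, Real.rpow_one]
      calc r ^ (p - 1) * (B * r ^ (q - p) + T * r ^ (2 - p))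
          = B * (r ^ (p - 1) * r ^ (q - p)) + T * (r ^ (p - 1) * r ^ (2 - p)) := by ring
        _ = r * T + r ^ (q - 1) * B := by rw [e1, e2]; ring
    · intro r L hr hL
      have e0 : r ^ (p - 2) * r ^ (2 - p) = 1 := by
        rw [← Real.rpow_add hr, show p - 2 + (2 - p) = 0 by ring, Real.rpow_zero]
      have e1 : r ^ (p - 2) * r ^ (q - p) = r ^ (q - 2) := by
        rw [← Real.rpow_add hr, show p - 2 + (q - p) = q - 2 by ring]
      have e3 : r ^ (q - 2) * r ^ (2 - p - (q - p)) = 1 := by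
        rw [← Real.rpow_add hr, show q - 2 + (2 - p - (q - p)) = 0 by ring, Real.rpow_zero]
      have h3 : L * A * r ^ (p - 2) = B * r ^ (q - 2) + T := by
        rw [← hL]
        calc (B * r ^ (q - p) + T * r ^ (2 - p)) * r ^ (p - 2)
            = B * (r ^ (p - 2) * r ^ (q - p)) + T * (r ^ (p - 2) * r ^ (2 - p)) := by ring
          _ = B * r ^ (q - 2) + T := by rw [e0, e1]; ring
      calc T - (p - 1) * L * r ^ (p - 2) * A + (q - 1) * r ^ (q - 2) * B
          = T - (p - 1) * (L * A * r ^ (p - 2)) + (q - 1) * r ^ (q - 2) * B := by ring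
        _ = T - (p - 1) * (B * r ^ (q - 2) + T) + (q - 1) * r ^ (q - 2) * B := by rw [h3]
        _ = (q - p) * B * r ^ (q - 2) + (2 - p) * T * (r ^ (q - 2) * r ^ (2 - p - (q - p))) := by
            rw [e3]; ring
        _ = r ^ (q - 2) * ((q - p) * B + (2 - p) * T * r ^ (2 - p - (q - p))) := by ring
  · -- 2 < p < q : u = 2 - p, C = T, v = q - p, D = B, e = 0
    apply auxF2 T A B p q T B (2 - p) (q - p) 0 hT hA hB hT hB
      (by linarith) (by linarith)
    · intro r hr
      have e1 : r ^ (p - 1) * r ^ (2 - p) = r := by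
        rw [← Real.rpow_add hr, show p - 1 + (2 - p) = 1 by ring, Real.rpow_one]
      have e2 : r ^ (p - 1) * r ^ (q - p) = r ^ (q - 1) := by
        rw [← Real.rpow_add hr, show p - 1 + (q - p) = q - 1 by ring]
      calc r ^ (p - 1) * (T * r ^ (2 - p) + B * r ^ (q - p))
          = T * (r ^ (p - 1) * r ^ (2 - p)) + B * (r ^ (p - 1) * r ^ (q - p)) := by ring
        _ = r * T + r ^ (q - 1) * B := by rw [e1, e2]; ring
    · intro r L hr hL
      have e0 : r ^ (p - 2) * r ^ (2 - p) = 1 := by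
        rw [← Real.rpow_add hr, show p - 2 + (2 - p) = 0 by ring, Real.rpow_zero]
      have e1 : r ^ (p - 2) * r ^ (q - p) = r ^ (q - 2) := by
        rw [← Real.rpow_add hr, show p - 2 + (q - p) = q - 2 by ring]
      have e2 : r ^ (q - p - (2 - p)) = r ^ (q - 2) := by
        rw [show q - p - (2 - p) = q - 2 by ring]
      have h3 : L * A * r ^ (p - 2) = T + B * r ^ (q - 2) := by
        rw [← hL]
        calc (T * r ^ (2 - p) + B * r ^ (q - p)) * r ^ (p - 2)
            = T * (r ^ (p - 2) * r ^ (2 - p)) + B * (r ^ (p - 2) * r ^ (q - p)) := by ring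
          _ = T + B * r ^ (q - 2) := by rw [e0, e1]; ring
      calc T - (p - 1) * L * r ^ (p - 2) * A + (q - 1) * r ^ (q - 2) * B
          = T - (p - 1) * (L * A * r ^ (p - 2)) + (q - 1) * r ^ (q - 2) * B := by ring
        _ = T - (p - 1) * (T + B * r ^ (q - 2)) + (q - 1) * r ^ (q - 2) * B := by rw [h3]
        _ = (2 - p) * T + (q - p) * B * r ^ (q - 2) := by ring
        _ = r ^ (0 : ℝ) * ((2 - p) * T + (q - p) * B * r ^ (q - p - (2 - p))) := by
            rw [Real.rpow_zero, e2]; ring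
end
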